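/- In the stochastic K-armed bandit with [0,1]-valued rewards and delayed feedback, the Delayed-UCB1 algorithm, which at round t plays a_t = argmax_i (μ̂_{i,S_i(t-1)} + √(2 log t / S_i(t-1))) using only the S_i(t-1) rewards of arm i observed so far, satisfies for every n ≥ 1: E[R_n] ≤ Σ_{i: Δ_i > 0} [ 8·log n / Δ_i + 3.5·Δ_i ] + Σ_{i=1}^K Δ_i · E[G*_{i,n}]. -/

import Mathlib

open MeasureTheory ProbabilityTheory


section DUCBhelpers
open Real

/-- Core analysis step of Hoeffding's lemma. -/
lemma DUCB_stepB {m : ℝ} (h0 : 0 ≤ m) (h1 : m ≤ 1) (x : ℝ) :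
    1 - m + m * Real.exp x ≤ Real.exp (x * m + x ^ 2 / 8) := by
  set D : ℝ → ℝ := fun y => 1 - m + m * Real.exp y with hDdef
  have hD : ∀ y, 0 < D y := by
    intro y
    rcases eq_or_lt_of_le h0 with h | h
    · simp [hDdef, ← h]
    · have := Real.exp_pos y
      have := mul_pos h (Real.exp_pos y)
      simp only [hDdef]
      nlinarith
  set g : ℝ → ℝ := fun y => y * m + y ^ 2 / 8 - Real.log (D y) with hgdef
  set g' : ℝ → ℝ := fun y => m + y / 4 - m * Real.exp y / D y with hg'def
  set G : ℝ → ℝ := fun y =>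
    1 / 4 - (m * Real.exp y * D y - m * Real.exp y * (m * Real.exp y)) / (D y) ^ 2 with hGdef
  have hDdiff : ∀ y, HasDerivAt D (m * Real.exp y) y := by
    intro y
    exact ((Real.hasDerivAt_exp y).const_mul m).const_add (1 - m)
  have hg : ∀ y, HasDerivAt g (g' y) y := by
    intro y
    have h1' : HasDerivAt (fun y : ℝ => y * m + y ^ 2 / 8) (m + y / 4) y := by
      have := ((hasDerivAt_id y).mul_const m).add ((hasDerivAt_pow 2 y).div_const 8)
      exact this.congr_deriv (by norm_num; ring)
    have h2' : HasDerivAt (fun y => Real.log (D y)) (m * Real.exp y / D y) y :=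
      (hDdiff y).log (hD y).ne'
    exact h1'.sub h2'
  have hg' : ∀ y, HasDerivAt g' (G y) y := by
    intro y
    have hq : HasDerivAt (fun y => m * Real.exp y / D y)
        ((m * Real.exp y * D y - m * Real.exp y * (m * Real.exp y)) / (D y) ^ 2) y := by
      exact HasDerivAt.div ((Real.hasDerivAt_exp y).const_mul m) (hDdiff y) (hD y).ne'
    have hlin : HasDerivAt (fun y : ℝ => m + y / 4) (1 / 4) y := by
      have := ((hasDerivAt_id y).div_const 4).const_add m
      exact this
    exact hlin.sub hq
  have hGnn : ∀ y, 0 ≤ G y := by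
    intro y
    have hE : 0 ≤ m * Real.exp y := mul_nonneg h0 (Real.exp_pos y).le
    have hED : m * Real.exp y ≤ D y := by simp only [hDdef]; linarith
    have h2 : (m * Real.exp y * D y - m * Real.exp y * (m * Real.exp y)) / (D y) ^ 2 ≤ 1 / 4 := by
      obtain ⟨d, hd⟩ : ∃ d, D y = d := ⟨_, rfl⟩
      obtain ⟨e, he⟩ : ∃ e, m * Real.exp y = e := ⟨_, rfl⟩
      rw [hd, he]
      rw [hd] at hED; rw [he] at hED hE
      have hdpos : 0 < d := hd ▸ hD y
      rw [div_le_iff₀ (pow_pos hdpos 2)]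
      nlinarith [sq_nonneg (d - 2 * e)]
    simp only [hGdef]
    linarith
  have hg'0 : g' 0 = 0 := by
    simp [hg'def, hDdef, Real.exp_zero]
  have hg0 : g 0 = 0 := by
    simp [hgdef, hDdef, Real.exp_zero]
  have hmono : Monotone g' := by
    apply monotone_of_deriv_nonneg (fun y => (hg' y).differentiableAt)
    intro y
    rw [(hg' y).deriv]
    exact hGnn y
  have hgx : 0 ≤ g x := by
    rcases le_total 0 x with hx | hx
    · have : MonotoneOn g (Set.Ici 0) := by
        apply monotoneOn_of_deriv_nonneg (convex_Ici 0)
          (Differentiable.continuous (fun y => (hg y).differentiableAt)).continuousOn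
          (fun y _ => (hg y).differentiableAt.differentiableWithinAt)
        intro y hy
        rw [(hg y).deriv]
        have : (0:ℝ) ≤ y := le_of_lt (by simpa using hy)
        calc (0:ℝ) = g' 0 := hg'0.symm
          _ ≤ g' y := hmono this
      have := this (Set.self_mem_Ici) (Set.mem_Ici.mpr hx) hx
      linarith [hg0 ▸ this]
    · have : AntitoneOn g (Set.Iic 0) := by
        apply antitoneOn_of_deriv_nonpos (convex_Iic 0)
          (Differentiable.continuous (fun y => (hg y).differentiableAt)).continuousOn
          (fun y _ => (hg y).differentiableAt.differentiableWithinAt)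
        intro y hy
        rw [(hg y).deriv]
        have hy0 : y ≤ (0:ℝ) := le_of_lt (by simpa using hy)
        calc g' y ≤ g' 0 := hmono hy0
          _ = 0 := hg'0
      have := this (Set.mem_Iic.mpr hx) (Set.self_mem_Iic) hx
      linarith [hg0 ▸ this]
  have hlog : Real.log (D x) ≤ x * m + x ^ 2 / 8 := by
    simp only [hgdef] at hgx
    linarith
  calc D x = Real.exp (Real.log (D x)) := (Real.exp_log (hD x)).symm
    _ ≤ Real.exp (x * m + x ^ 2 / 8) := Real.exp_le_exp.mpr hlog


lemma DUCB_mgf {Ω : Type*} [MeasurableSpace Ω] (μ : Measure Ω) [IsProbabilityMeasure μ]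
    (X : Ω → ℝ) (hX : Measurable X) (hb : ∀ ω, X ω ∈ Set.Icc (0:ℝ) 1) (l : ℝ) :
    mgf X μ l ≤ Real.exp (l * μ[X] + l ^ 2 / 8) := by
  have hXint : Integrable X μ := by
    refine (integrable_const (1:ℝ)).mono' hX.aestronglyMeasurable (ae_of_all _ fun ω => ?_)
    rw [Real.norm_eq_abs, abs_le]
    exact ⟨by linarith [(hb ω).1], (hb ω).2⟩
  have hm0 : 0 ≤ μ[X] := integral_nonneg fun ω => (hb ω).1
  have hm1 : μ[X] ≤ 1 := by
    have h := integral_mono (μ := μ) (f := X) (g := fun _ => (1:ℝ)) hXint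
      (integrable_const 1) (fun ω => (hb ω).2)
    simpa using h
  have hint1 : Integrable (fun ω => Real.exp (l * X ω)) μ := by
    refine (integrable_const (Real.exp |l|)).mono'
      ((hX.const_mul l).exp).aestronglyMeasurable (ae_of_all _ fun ω => ?_)
    rw [Real.norm_eq_abs, abs_of_pos (Real.exp_pos _), Real.exp_le_exp]
    calc l * X ω ≤ |l * X ω| := le_abs_self _
      _ = |l| * |X ω| := abs_mul _ _
      _ ≤ |l| * 1 := by
          refine mul_le_mul_of_nonneg_left ?_ (abs_nonneg l)
          rw [abs_le]; exact ⟨by linarith [(hb ω).1], (hb ω).2⟩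
      _ = |l| := mul_one _
  have hintA : Integrable (fun ω => 1 - X ω) μ := (integrable_const (1:ℝ)).sub hXint
  have hintB : Integrable (fun ω => X ω * Real.exp l) μ := hXint.mul_const _
  have hint2 : Integrable (fun ω => 1 - X ω + X ω * Real.exp l) μ := hintA.add hintB
  have hpt : ∀ ω, Real.exp (l * X ω) ≤ 1 - X ω + X ω * Real.exp l := by
    intro ω
    have hx0 := (hb ω).1
    have hx1 := (hb ω).2
    have := convexOn_exp.2 (Set.mem_univ (0:ℝ)) (Set.mem_univ l)
      (by linarith : (0:ℝ) ≤ 1 - X ω) hx0 (by ring)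
    simp only [smul_eq_mul, mul_zero, Real.exp_zero, mul_one, zero_add] at this
    calc Real.exp (l * X ω) = Real.exp (X ω * l) := by rw [mul_comm]
      _ ≤ (1 - X ω) * 1 + X ω * Real.exp l := by simpa using this
      _ = 1 - X ω + X ω * Real.exp l := by ring
  calc mgf X μ l = μ[fun ω => Real.exp (l * X ω)] := rfl
    _ ≤ μ[fun ω => 1 - X ω + X ω * Real.exp l] := integral_mono hint1 hint2 hpt
    _ = 1 - μ[X] + μ[X] * Real.exp l := by
        rw [integral_add hintA hintB,
          integral_sub (integrable_const (1:ℝ)) hXint, integral_mul_const, integral_const]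
        simp
    _ ≤ Real.exp (l * μ[X] + l ^ 2 / 8) := DUCB_stepB hm0 hm1 l

lemma DUCB_tail {Ω : Type*} [MeasurableSpace Ω] (μ : Measure Ω) [IsProbabilityMeasure μ]
    (X : ℕ → Ω → ℝ) (hm : ∀ k, Measurable (X k))
    (hind : iIndepFun X μ)
    (hb : ∀ k ω, X k ω ∈ Set.Icc (0:ℝ) 1) (m : ℝ) (hmean : ∀ k, μ[X k] = m)
    (s : ℕ) (c : ℝ) (hc : 0 ≤ c) :
    (μ {ω | s * m + s * c ≤ ∑ k ∈ Finset.Icc 1 s, X k ω}).toReal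
      ≤ Real.exp (-2 * s * c ^ 2) := by
  have hmeassum : Measurable (∑ k ∈ Finset.Icc 1 s, X k) := by
    have h := Finset.measurable_sum (Finset.Icc 1 s) (fun k _ => hm k)
    have he : (∑ k ∈ Finset.Icc 1 s, X k) = fun ω => ∑ k ∈ Finset.Icc 1 s, X k ω :=
      funext fun ω => Finset.sum_apply ω _ _
    rw [he]
    exact h
  have hint : Integrable (fun ω => Real.exp (4 * c * (∑ k ∈ Finset.Icc 1 s, X k) ω)) μ := by
    refine (integrable_const (Real.exp (4 * c * s))).mono'
      ((hmeassum.const_mul _).exp).aestronglyMeasurable (ae_of_all _ fun ω => ?_)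
    rw [Real.norm_eq_abs, abs_of_pos (Real.exp_pos _), Real.exp_le_exp]
    refine mul_le_mul_of_nonneg_left ?_ (by positivity)
    rw [Finset.sum_apply]
    calc ∑ k ∈ Finset.Icc 1 s, X k ω ≤ ∑ k ∈ Finset.Icc 1 s, (1:ℝ) :=
          Finset.sum_le_sum fun k _ => (hb k ω).2
      _ = s := by simp
  have hchernoff := measure_ge_le_exp_mul_mgf (μ := μ) (X := ∑ k ∈ Finset.Icc 1 s, X k)
    (s * m + s * c) (by positivity : (0:ℝ) ≤ 4 * c) hint
  have hmgf : mgf (∑ k ∈ Finset.Icc 1 s, X k) μ (4 * c)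
      ≤ Real.exp (s * (4 * c * m + (4 * c) ^ 2 / 8)) := by
    rw [hind.mgf_sum hm (Finset.Icc 1 s)]
    calc ∏ k ∈ Finset.Icc 1 s, mgf (X k) μ (4 * c)
        ≤ ∏ k ∈ Finset.Icc 1 s, Real.exp (4 * c * m + (4 * c) ^ 2 / 8) := by
          refine Finset.prod_le_prod (fun k _ => mgf_nonneg) (fun k _ => ?_)
          have := DUCB_mgf μ (X k) (hm k) (hb k) (4 * c)
          rwa [hmean k] at this
      _ = Real.exp (4 * c * m + (4 * c) ^ 2 / 8) ^ (Finset.Icc 1 s).card := Finset.prod_const _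
      _ = Real.exp (s * (4 * c * m + (4 * c) ^ 2 / 8)) := by
          rw [Nat.card_Icc, ← Real.exp_nat_mul]
          norm_num
  have hset : {ω | s * m + s * c ≤ ∑ k ∈ Finset.Icc 1 s, X k ω}
      = {ω | s * m + s * c ≤ (∑ k ∈ Finset.Icc 1 s, X k) ω} := by
    ext ω; simp [Finset.sum_apply]
  rw [hset]
  calc (μ {ω | s * m + s * c ≤ (∑ k ∈ Finset.Icc 1 s, X k) ω}).toReal
      ≤ Real.exp (-(4 * c) * (s * m + s * c)) * mgf (∑ k ∈ Finset.Icc 1 s, X k) μ (4 * c) :=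
        hchernoff
    _ ≤ Real.exp (-(4 * c) * (s * m + s * c)) * Real.exp (s * (4 * c * m + (4 * c) ^ 2 / 8)) :=
        mul_le_mul_of_nonneg_left hmgf (Real.exp_pos _).le
    _ = Real.exp (-2 * s * c ^ 2) := by
        rw [← Real.exp_add]
        congr 1
        ring

lemma DUCB_tail_lo {Ω : Type*} [MeasurableSpace Ω] (μ : Measure Ω) [IsProbabilityMeasure μ]
    (X : ℕ → Ω → ℝ) (hm : ∀ k, Measurable (X k))
    (hind : iIndepFun X μ)
    (hb : ∀ k ω, X k ω ∈ Set.Icc (0:ℝ) 1) (m : ℝ) (hmean : ∀ k, μ[X k] = m)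
    (s : ℕ) (c : ℝ) (hc : 0 ≤ c) :
    (μ {ω | ∑ k ∈ Finset.Icc 1 s, X k ω ≤ s * m - s * c}).toReal
      ≤ Real.exp (-2 * s * c ^ 2) := by
  have hY : ∀ k, Measurable (fun ω => 1 - X k ω) := fun k => measurable_const.sub (hm k)
  have hindY : iIndepFun (fun k => fun ω => 1 - X k ω) μ := by
    have := hind.comp (fun _ => fun x : ℝ => 1 - x) (fun _ => measurable_const.sub measurable_id)
    exact this
  have hbY : ∀ k ω, (fun ω => 1 - X k ω) ω ∈ Set.Icc (0:ℝ) 1 := by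
    intro k ω
    constructor
    · simp only; linarith [(hb k ω).2]
    · simp only; linarith [(hb k ω).1]
  have hXint : ∀ k, Integrable (X k) μ := by
    intro k
    refine (integrable_const (1:ℝ)).mono' (hm k).aestronglyMeasurable (ae_of_all _ fun ω => ?_)
    rw [Real.norm_eq_abs, abs_le]
    exact ⟨by linarith [(hb k ω).1], (hb k ω).2⟩
  have hmeanY : ∀ k, μ[fun ω => 1 - X k ω] = 1 - m := by
    intro k
    rw [integral_sub (integrable_const 1) (hXint k), integral_const, hmean k]
    simp
  have := DUCB_tail μ _ hY hindY hbY (1 - m) hmeanY s c hc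
  have hset : {ω | (s:ℝ) * (1 - m) + s * c ≤ ∑ k ∈ Finset.Icc 1 s, (1 - X k ω)}
      = {ω | ∑ k ∈ Finset.Icc 1 s, X k ω ≤ s * m - s * c} := by
    ext ω
    simp only [Set.mem_setOf_eq, Finset.sum_sub_distrib, Finset.sum_const, Nat.card_Icc,
      nsmul_eq_mul]
    constructor <;> intro h <;> push_cast at * <;> linarith
  rwa [hset] at this

lemma DUCB_sum_cube_aux (n : ℕ) (hn : 2 ≤ n) :
    ∑ t ∈ Finset.Icc 1 n, (((t:ℝ)) ^ 3)⁻¹ ≤ 5 / 4 - ((n:ℝ) ^ 2)⁻¹ / 2 := by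
  induction n, hn using Nat.le_induction with
  | base => norm_num [Finset.sum_Icc_succ_top]
  | succ n hn ih =>
    rw [Finset.sum_Icc_succ_top (by omega)]
    have hN : (2:ℝ) ≤ (n:ℝ) := by exact_mod_cast hn
    have h0 : (0:ℝ) < (n:ℝ) := by linarith
    have h1 : (0:ℝ) < (n:ℝ) + 1 := by linarith
    have key : (((n:ℝ) + 1) ^ 3)⁻¹ ≤ ((n:ℝ) ^ 2)⁻¹ / 2 - (((n:ℝ) + 1) ^ 2)⁻¹ / 2 := by
      rw [inv_eq_one_div, inv_eq_one_div, inv_eq_one_div, div_div, div_div,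
        div_sub_div _ _ (by positivity) (by positivity), div_le_div_iff₀ (by positivity)
        (by positivity)]
      ring_nf
      nlinarith [pow_pos h0 2, pow_pos h1 2, pow_pos h1 3]
    push_cast
    push_cast at ih
    linarith

lemma DUCB_sum_cube (n : ℕ) : ∑ t ∈ Finset.Icc 1 n, (((t:ℝ)) ^ 3)⁻¹ ≤ 5 / 4 := by
  match n with
  | 0 => norm_num
  | 1 => norm_num
  | (m + 2) =>
    have := DUCB_sum_cube_aux (m + 2) (by omega)
    have h2 : (0:ℝ) < ((m:ℝ) + 2) ^ 2 := by positivity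
    have : (0:ℝ) ≤ (((m + 2 : ℕ):ℝ) ^ 2)⁻¹ / 2 := by positivity
    linarith [DUCB_sum_cube_aux (m + 2) (by omega)]


lemma DUCB_meas_sup {Ω : Type*} [MeasurableSpace Ω] (s : Finset ℕ) (f : ℕ → Ω → ℕ)
    (hf : ∀ t, Measurable (f t)) : Measurable (fun ω => s.sup (fun t => f t ω)) := by
  classical
  induction s using Finset.induction_on with
  | empty => simpa [Finset.sup_empty] using measurable_const
  | insert _ _ _ ih =>
    simp only [Finset.sup_insert]
    exact (hf _).sup ih


lemma DUCB_count (n ℓ : ℕ) (hl : 1 ≤ ℓ) (p : ℕ → Prop) [DecidablePred p]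
    (Sf Tf : ℕ → ℕ) (G : ℕ)
    (hTf : ∀ t, Tf t = ((Finset.Icc 1 t).filter (fun s => p s)).card)
    (hST : ∀ t, t ≤ n → Sf t ≤ Tf t)
    (hG : ∀ t, 1 ≤ t → t ≤ n → Tf (t - 1) - Sf (t - 1) ≤ G) :
    ((Finset.Icc 1 n).filter (fun t => p t ∧ Sf (t - 1) < ℓ)).card ≤ ℓ + G := by
  classical
  rcases ((Finset.Icc 1 n).filter (fun t => p t ∧ Sf (t - 1) < ℓ)).eq_empty_or_nonempty
    with hA | hA
  · rw [hA]; simp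
  · obtain ⟨t0, ht0mem⟩ :=
      ((Finset.Icc 1 n).filter (fun t => p t ∧ Sf (t - 1) < ℓ)).exists_max_image id hA
    obtain ⟨ht0mem, ht0max⟩ := ht0mem
    have ht0' := ht0mem
    rw [Finset.mem_filter, Finset.mem_Icc] at ht0'
    obtain ⟨⟨h1t0, ht0n⟩, hpt0, hSlt⟩ := ht0'
    have hsub : (Finset.Icc 1 n).filter (fun t => p t ∧ Sf (t - 1) < ℓ)
        ⊆ (Finset.Icc 1 t0).filter (fun r => p r) := by
      intro x hx
      have hx' := hx
      rw [Finset.mem_filter, Finset.mem_Icc] at hx'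
      rw [Finset.mem_filter, Finset.mem_Icc]
      exact ⟨⟨hx'.1.1, ht0max x hx⟩, hx'.2.1⟩
    have hcard : ((Finset.Icc 1 n).filter (fun t => p t ∧ Sf (t - 1) < ℓ)).card ≤ Tf t0 := by
      rw [hTf t0]
      exact Finset.card_le_card hsub
    have hsplit : Tf t0 = Tf (t0 - 1) + 1 := by
      rw [hTf t0, hTf (t0 - 1)]
      have hins : Finset.Icc 1 t0 = insert t0 (Finset.Icc 1 (t0 - 1)) := by
        ext x
        simp only [Finset.mem_Icc, Finset.mem_insert]
        omega
      rw [hins, Finset.filter_insert, if_pos hpt0, Finset.card_insert_of_notMem]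
      intro hmem
      rw [Finset.mem_filter, Finset.mem_Icc] at hmem
      omega
    have hTS := hST (t0 - 1) (by omega)
    have hGle := hG t0 h1t0 ht0n
    omega


end DUCBhelpers

set_option maxHeartbeats 1000000 in
/-- Theorem 4, regret of Delayed-UCB1: in a stochastic `K`-armed bandit
with `[0,1]`-valued rewards and delayed feedback, `hpr i k` denotes the `k`-th observed
reward of arm `i` (for each arm these are i.i.d. with mean `μi i` — the conclusion of
Lemma 1, since delays are independent of rewards), `a t` is the arm played at round `t`,
`S i t` the number of feedbacks of arm `i` received by the end of round `t`, and
`T i t` the number of plays of arm `i` in rounds `1,…,t`.  The algorithm plays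
`a t = argmax_i (μ̂_{i,S_i(t-1)} + √(2 log t / S_i(t-1)))` over the arms (with each arm
observed at least once, i.e. arms with no observed reward are played first).  Then with
`Δ i = μ* − μi i` and `G*_{i,n} = max_{1 ≤ t ≤ n} (T i (t-1) − S i (t-1))`,
`E[R_n] = ∑_i Δ_i E[T_i(n)] ≤ ∑_{i : Δ_i > 0} (8 log n / Δ_i + 3.5 Δ_i)
  + ∑_i Δ_i E[G*_{i,n}]`. -/
theorem delayed_ucb1_regret
    {Ω : Type*} [MeasurableSpace Ω] (μ : Measure Ω) [IsProbabilityMeasure μ]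
    (K : ℕ) (hK : 1 ≤ K) (n : ℕ) (hn : 1 ≤ n)
    (μi : Fin K → ℝ)
    (μstar : ℝ) (hμstar : μstar = Finset.univ.sup' (Finset.univ_nonempty_iff.mpr
        (Fin.pos_iff_nonempty.mp hK)) μi)
    (Δ : Fin K → ℝ) (hΔ : ∀ i, Δ i = μstar - μi i)
    -- the sequence of observed rewards of each arm is i.i.d. with mean `μi i`,
    -- with values in [0,1] (Lemma 1; delays are independent of rewards):
    (hpr : Fin K → ℕ → Ω → ℝ)
    (hprmeas : ∀ i k, Measurable (hpr i k))
    (hpriid : ∀ i, iIndepFun (hpr i) μ)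
    (hprident : ∀ i k, Measure.map (hpr i k) μ = Measure.map (hpr i 1) μ)
    (hprbdd : ∀ i k ω, hpr i k ω ∈ Set.Icc (0 : ℝ) 1)
    (hprmean : ∀ i k, μ[hpr i k] = μi i)
    -- plays, observed-feedback counts, and play counts:
    (a : ℕ → Ω → Fin K) (hameas : ∀ t, Measurable (a t))
    (S : Fin K → ℕ → Ω → ℕ) (hSmeas : ∀ i t, Measurable (S i t))
    (hS0 : ∀ i ω, S i 0 ω = 0) (hSmono : ∀ i ω, Monotone (fun t => S i t ω))
    (T : Fin K → ℕ → Ω → ℕ)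
    (hT : ∀ i t ω, T i t ω = ((Finset.Icc 1 t).filter (fun s => a s ω = i)).card)
    (hST : ∀ i t ω, t ≤ n → S i t ω ≤ T i t ω)
    -- the empirical means and upper confidence bounds of Delayed-UCB1:
    (muhat : Fin K → ℕ → Ω → ℝ)
    (hmuhat : ∀ i s ω, muhat i s ω = (1 / s) * ∑ k ∈ Finset.Icc 1 s, hpr i k ω)
    (B : Fin K → ℕ → ℕ → Ω → ℝ)
    (hB : ∀ i s t ω, B i s t ω = muhat i s ω + Real.sqrt (2 * Real.log t / s))
    -- the decision rule: play a never-observed arm if one exists, otherwise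
    -- play the arm maximizing the upper confidence bound:
    (harg1 : ∀ t ω, 1 ≤ t → t ≤ n → (∀ j, 1 ≤ S j (t - 1) ω) →
      ∀ j, B j (S j (t - 1) ω) t ω ≤ B (a t ω) (S (a t ω) (t - 1) ω) t ω)
    (harg2 : ∀ t ω, 1 ≤ t → t ≤ n → (∃ j, S j (t - 1) ω = 0) →
      S (a t ω) (t - 1) ω = 0) :
    ∑ i, Δ i * μ[fun ω => (T i n ω : ℝ)]
      ≤ (∑ i ∈ Finset.univ.filter (fun i => 0 < Δ i), (8 * Real.log n / Δ i + 3.5 * Δ i))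
        + ∑ i, Δ i * μ[fun ω =>
            (((Finset.Icc 1 n).sup (fun t => T i (t - 1) ω - S i (t - 1) ω) : ℕ) : ℝ)] := by
  classical
  -- basic positivity facts
  have hμ039 : ∀ i, μi i ≤ μstar := by
    intro i
    rw [hμstar]
    exact Finset.le_sup' μi (Finset.mem_univ i)
  have hΔnn : ∀ i, 0 ≤ Δ i := fun i => by rw [hΔ i]; linarith [hμ039 i]
  obtain ⟨istar, -, histar⟩ :
      ∃ j ∈ Finset.univ, Finset.univ.sup' (Finset.univ_nonempty_iff.mpr
        (Fin.pos_iff_nonempty.mp hK)) μi = μi j := Finset.exists_mem_eq_sup' _ μi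
  have histar' : μi istar = μstar := by rw [hμstar, histar]
  have hlogn : 0 ≤ Real.log n := Real.log_nonneg (by exact_mod_cast hn)
  -- measurability and boundedness helpers
  have hTmeas : ∀ i t, Measurable (fun ω => T i t ω) := by
    intro i t
    have he : (fun ω => T i t ω)
        = fun ω => ∑ s ∈ Finset.Icc 1 t, if a s ω = i then 1 else 0 := by
      funext ω
      rw [hT i t ω, Finset.card_filter]
    rw [he]
    exact Finset.measurable_sum _ fun s _ =>
      Measurable.ite ((hameas s) (measurableSet_singleton i)) measurable_const measurable_const
  have hTle : ∀ i t ω, T i t ω ≤ t := by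
    intro i t ω
    rw [hT i t ω]
    calc ((Finset.Icc 1 t).filter (fun s => a s ω = i)).card
        ≤ (Finset.Icc 1 t).card := Finset.card_filter_le _ _
      _ = t := by rw [Nat.card_Icc]; omega
  set Gi : Fin K → Ω → ℕ :=
    fun i ω => (Finset.Icc 1 n).sup (fun t => T i (t - 1) ω - S i (t - 1) ω) with hGidef
  have hGimeas : ∀ i, Measurable (Gi i) := by
    intro i
    exact DUCB_meas_sup _ _ fun t => (hTmeas i (t - 1)).sub (hSmeas i (t - 1))
  have hGile : ∀ i ω, Gi i ω ≤ n := by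
    intro i ω
    apply Finset.sup_le
    intro t ht
    rw [Finset.mem_Icc] at ht
    have := hTle i (t - 1) ω
    omega
  have hGiint : ∀ i, Integrable (fun ω => (Gi i ω : ℝ)) μ := by
    intro i
    refine (integrable_const (n:ℝ)).mono'
      (measurable_from_top.comp (hGimeas i)).aestronglyMeasurable (ae_of_all _ fun ω => ?_)
    rw [Real.norm_eq_abs, abs_of_nonneg (by positivity)]
    exact_mod_cast hGile i ω
  have hTint : ∀ i, Integrable (fun ω => (T i n ω : ℝ)) μ := by
    intro i
    refine (integrable_const (n:ℝ)).mono'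
      (measurable_from_top.comp (hTmeas i n)).aestronglyMeasurable (ae_of_all _ fun ω => ?_)
    rw [Real.norm_eq_abs, abs_of_nonneg (by positivity)]
    exact_mod_cast hTle i n ω
  have hmuhmeas : ∀ j s, Measurable (muhat j s) := by
    intro j s
    have he : muhat j s = fun ω => (1 / (s:ℝ)) * ∑ k ∈ Finset.Icc 1 s, hpr j k ω :=
      funext (hmuhat j s)
    rw [he]
    exact (Finset.measurable_sum _ fun k _ => hprmeas j k).const_mul _
  -- the per-arm estimate
  have key : ∀ i, 0 < Δ i →
      μ[fun ω => (T i n ω : ℝ)]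
        ≤ (8 * Real.log n / (Δ i) ^ 2 + 1) + 5 / 2 + μ[fun ω => (Gi i ω : ℝ)] := by
    intro i hi
    set c : ℕ → ℕ → ℝ := fun t s => Real.sqrt (2 * Real.log t / s) with hcdef
    set ℓ : ℕ := max 1 ⌈8 * Real.log n / (Δ i) ^ 2⌉₊ with hldef
    have hl1 : 1 ≤ ℓ := le_max_left _ _
    have hlx : 8 * Real.log n / (Δ i) ^ 2 ≤ (ℓ:ℝ) := by
      calc 8 * Real.log n / (Δ i) ^ 2 ≤ (⌈8 * Real.log n / (Δ i) ^ 2⌉₊ : ℝ) := Nat.le_ceil _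
        _ ≤ (ℓ:ℝ) := by exact_mod_cast le_max_right _ _
    have hlub : (ℓ:ℝ) ≤ 8 * Real.log n / (Δ i) ^ 2 + 1 := by
      have hx0 : 0 ≤ 8 * Real.log n / (Δ i) ^ 2 := by positivity
      have h1 : (⌈8 * Real.log n / (Δ i) ^ 2⌉₊ : ℝ) ≤ 8 * Real.log n / (Δ i) ^ 2 + 1 :=
        (Nat.ceil_lt_add_one hx0).le
      rw [hldef]
      push_cast [Nat.cast_max]
      exact max_le (by linarith) h1
    set E1 : ℕ → ℕ → Set Ω := fun t s => {ω | muhat istar s ω + c t s ≤ μstar} with hE1def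
    set E2 : ℕ → ℕ → Set Ω := fun t s => {ω | μi i + c t s ≤ muhat i s ω} with hE2def
    have hE1meas : ∀ t s, MeasurableSet (E1 t s) :=
      fun t s => measurableSet_le ((hmuhmeas istar s).add_const _) measurable_const
    have hE2meas : ∀ t s, MeasurableSet (E2 t s) :=
      fun t s => measurableSet_le measurable_const (hmuhmeas i s)
    -- step (b): bad round implies confidence failure
    have hbad : ∀ t, t ∈ Finset.Icc 1 n → ∀ ω, a t ω = i → ℓ ≤ S i (t - 1) ω →
        ∃ s ∈ Finset.Icc 1 t, ω ∈ E1 t s ∨ ω ∈ E2 t s := by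
      intro t ht ω hat hS
      rw [Finset.mem_Icc] at ht
      have hSi1 : 1 ≤ S i (t - 1) ω := le_trans hl1 hS
      have hall : ∀ j, 1 ≤ S j (t - 1) ω := by
        by_contra hcon
        push_neg at hcon
        obtain ⟨j, hj⟩ := hcon
        have := harg2 t ω ht.1 ht.2 ⟨j, by omega⟩
        rw [hat] at this
        omega
      have hcmp := harg1 t ω ht.1 ht.2 hall istar
      rw [hat] at hcmp
      have hsle : S i (t - 1) ω ≤ t := by
        have h1 := hST i (t - 1) ω (by omega)
        have h2 := hTle i (t - 1) ω
        omega
      have hsstarle : S istar (t - 1) ω ≤ t := by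
        have h1 := hST istar (t - 1) ω (by omega)
        have h2 := hTle istar (t - 1) ω
        omega
      by_cases hE1c : muhat istar (S istar (t - 1) ω) ω + c t (S istar (t - 1) ω) ≤ μstar
      · exact ⟨S istar (t - 1) ω, Finset.mem_Icc.mpr ⟨hall istar, hsstarle⟩, Or.inl hE1c⟩
      · refine ⟨S i (t - 1) ω, Finset.mem_Icc.mpr ⟨hSi1, hsle⟩, Or.inr ?_⟩
        push_neg at hE1c
        rw [hB, hB] at hcmp
        have hlogt : 0 ≤ Real.log t := Real.log_nonneg (by exact_mod_cast ht.1)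
        have hst : 0 < (S i (t - 1) ω : ℝ) := by exact_mod_cast hSi1
        have hslog : 8 * Real.log t ≤ (S i (t - 1) ω : ℝ) * (Δ i) ^ 2 := by
          have hlog2 : Real.log t ≤ Real.log n :=
            Real.log_le_log (by exact_mod_cast ht.1) (by exact_mod_cast ht.2)
          have hls : (ℓ:ℝ) ≤ (S i (t - 1) ω : ℝ) := by exact_mod_cast hS
          have := le_trans hlx hls
          rw [div_le_iff₀ (by positivity)] at this
          nlinarith
        have hc2 : c t (S i (t - 1) ω) ≤ Δ i / 2 := by
          rw [hcdef]
          have h1 : 2 * Real.log t / (S i (t - 1) ω : ℝ) ≤ (Δ i / 2) ^ 2 := by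
            rw [div_le_iff₀ hst]
            nlinarith
          calc Real.sqrt (2 * Real.log t / (S i (t - 1) ω : ℝ))
              ≤ Real.sqrt ((Δ i / 2) ^ 2) := Real.sqrt_le_sqrt h1
            _ = Δ i / 2 := Real.sqrt_sq (by positivity)
        have hΔi := hΔ i
        show μi i + c t (S i (t - 1) ω) ≤ muhat i (S i (t - 1) ω) ω
        have hsq : 0 ≤ c t (S i (t - 1) ω) := Real.sqrt_nonneg _
        linarith
    -- step (a): counting rounds with few samples
    have hcount : ∀ ω,
        (((Finset.Icc 1 n).filter (fun t => a t ω = i ∧ S i (t - 1) ω < ℓ)).card)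
          ≤ ℓ + Gi i ω := by
      intro ω
      apply DUCB_count n ℓ hl1 (fun t => a t ω = i) (fun t => S i t ω) (fun t => T i t ω)
        (Gi i ω) (fun t => hT i t ω) (fun t ht => hST i t ω ht)
      intro t h1 h2
      exact Finset.le_sup (f := fun t => T i (t - 1) ω - S i (t - 1) ω)
        (Finset.mem_Icc.mpr ⟨h1, h2⟩)
    -- pointwise bound
    have hpt : ∀ ω, (T i n ω : ℝ)
        ≤ (ℓ : ℝ) + (Gi i ω : ℝ) + ∑ t ∈ Finset.Icc 1 n, ∑ s ∈ Finset.Icc 1 t,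
            ((E1 t s).indicator (fun _ => (1:ℝ)) ω + (E2 t s).indicator (fun _ => (1:ℝ)) ω) := by
      intro ω
      have hsplitn : T i n ω
          = ((Finset.Icc 1 n).filter (fun t => a t ω = i ∧ S i (t - 1) ω < ℓ)).card
            + ((Finset.Icc 1 n).filter (fun t => a t ω = i ∧ ¬ S i (t - 1) ω < ℓ)).card := by
        rw [hT i n ω]
        rw [← Finset.filter_filter, ← Finset.filter_filter]
        exact (Finset.card_filter_add_card_filter_not
          (s := (Finset.Icc 1 n).filter (fun t => a t ω = i))
          (fun t => S i (t - 1) ω < ℓ)).symm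
      have hBc : ((((Finset.Icc 1 n).filter
            (fun t => a t ω = i ∧ ¬ S i (t - 1) ω < ℓ)).card : ℝ))
          ≤ ∑ t ∈ Finset.Icc 1 n, ∑ s ∈ Finset.Icc 1 t,
            ((E1 t s).indicator (fun _ => (1:ℝ)) ω + (E2 t s).indicator (fun _ => (1:ℝ)) ω) := by
        rw [Finset.card_filter]
        push_cast
        apply Finset.sum_le_sum
        intro t ht
        by_cases hp : a t ω = i ∧ ¬ S i (t - 1) ω < ℓ
        · rw [if_pos hp]
          obtain ⟨s0, hs0mem, hcase⟩ := hbad t ht ω hp.1 (by omega)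
          have hterm : (1:ℝ) ≤ (E1 t s0).indicator (fun _ => (1:ℝ)) ω
              + (E2 t s0).indicator (fun _ => (1:ℝ)) ω := by
            rcases hcase with hc | hc
            · rw [Set.indicator_of_mem hc]
              have := Set.indicator_nonneg (s := E2 t s0)
                (f := fun _ => (1:ℝ)) (fun _ _ => zero_le_one) ω
              linarith
            · rw [Set.indicator_of_mem hc]
              have := Set.indicator_nonneg (s := E1 t s0)
                (f := fun _ => (1:ℝ)) (fun _ _ => zero_le_one) ω
              linarith
          calc (1:ℝ) ≤ _ := hterm
            _ ≤ ∑ s ∈ Finset.Icc 1 t, ((E1 t s).indicator (fun _ => (1:ℝ)) ω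
                + (E2 t s).indicator (fun _ => (1:ℝ)) ω) := by
              apply Finset.single_le_sum (f := fun s => (E1 t s).indicator (fun _ => (1:ℝ)) ω
                + (E2 t s).indicator (fun _ => (1:ℝ)) ω) _ hs0mem
              intro s _
              exact add_nonneg (Set.indicator_nonneg (fun _ _ => zero_le_one) ω)
                (Set.indicator_nonneg (fun _ _ => zero_le_one) ω)
        · rw [if_neg hp]
          apply Finset.sum_nonneg
          intro s _
          have h1 := Set.indicator_nonneg (s := E1 t s)
            (f := fun _ => (1:ℝ)) (fun _ _ => zero_le_one) ω
          have h2 := Set.indicator_nonneg (s := E2 t s)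
            (f := fun _ => (1:ℝ)) (fun _ _ => zero_le_one) ω
          linarith
      have hAcast : ((((Finset.Icc 1 n).filter
            (fun t => a t ω = i ∧ S i (t - 1) ω < ℓ)).card : ℝ)) ≤ (ℓ : ℝ) + (Gi i ω : ℝ) := by
        exact_mod_cast hcount ω
      rw [hsplitn]
      push_cast
      linarith
    -- integrate the pointwise bound
    have hindint : ∀ (E : Set Ω), MeasurableSet E →
        Integrable (fun ω => E.indicator (fun _ => (1:ℝ)) ω) μ := by
      intro E hE
      exact (integrable_const (1:ℝ)).indicator hE
    have hpair : ∀ t s, Integrable (fun ω => (E1 t s).indicator (fun _ => (1:ℝ)) ω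
        + (E2 t s).indicator (fun _ => (1:ℝ)) ω) μ :=
      fun t s => (hindint _ (hE1meas t s)).add (hindint _ (hE2meas t s))
    have hsumint : Integrable (fun ω => ∑ t ∈ Finset.Icc 1 n, ∑ s ∈ Finset.Icc 1 t,
        ((E1 t s).indicator (fun _ => (1:ℝ)) ω + (E2 t s).indicator (fun _ => (1:ℝ)) ω)) μ := by
      apply integrable_finset_sum
      intro t _
      exact integrable_finset_sum _ (fun s _ => hpair t s)
    have hrhsint : Integrable (fun ω => (ℓ : ℝ) + (Gi i ω : ℝ)
        + ∑ t ∈ Finset.Icc 1 n, ∑ s ∈ Finset.Icc 1 t,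
          ((E1 t s).indicator (fun _ => (1:ℝ)) ω + (E2 t s).indicator (fun _ => (1:ℝ)) ω)) μ :=
      (((integrable_const _).add (hGiint i)).add hsumint)
    have hmono := integral_mono (hTint i) hrhsint hpt
    -- compute the RHS integral
    have hrhs : μ[fun ω => (ℓ : ℝ) + (Gi i ω : ℝ)
        + ∑ t ∈ Finset.Icc 1 n, ∑ s ∈ Finset.Icc 1 t,
          ((E1 t s).indicator (fun _ => (1:ℝ)) ω + (E2 t s).indicator (fun _ => (1:ℝ)) ω)]
        = (ℓ : ℝ) + μ[fun ω => (Gi i ω : ℝ)]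
          + ∑ t ∈ Finset.Icc 1 n, ∑ s ∈ Finset.Icc 1 t,
            ((μ (E1 t s)).toReal + (μ (E2 t s)).toReal) := by
      have hc1 : Integrable (fun ω => (ℓ : ℝ) + (Gi i ω : ℝ)) μ :=
        (integrable_const _).add (hGiint i)
      rw [integral_add hc1 hsumint, integral_add (integrable_const _) (hGiint i),
        integral_const]
      simp only [measure_univ, ENNReal.toReal_one, smul_eq_mul, probReal_univ, one_mul]
      congr 1
      rw [integral_finset_sum _ (fun t _ => integrable_finset_sum _ (fun s _ => hpair t s))]
      apply Finset.sum_congr rfl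
      intro t _
      rw [integral_finset_sum _ (fun s _ => hpair t s)]
      apply Finset.sum_congr rfl
      intro s _
      rw [integral_add (hindint _ (hE1meas t s)) (hindint _ (hE2meas t s)),
        integral_indicator_const (1:ℝ) (hE1meas t s),
        integral_indicator_const (1:ℝ) (hE2meas t s)]
      simp [Measure.real]
    -- probability bounds
    have hprob : ∀ t ∈ Finset.Icc 1 n, ∀ s ∈ Finset.Icc 1 t,
        (μ (E1 t s)).toReal + (μ (E2 t s)).toReal
          ≤ 2 * Real.exp (-(4:ℝ) * Real.log t) := by
      intro t ht s hs
      rw [Finset.mem_Icc] at ht hs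
      have hst : (0:ℝ) < (s:ℝ) := by exact_mod_cast hs.1
      have hlogt : 0 ≤ Real.log t := Real.log_nonneg (by exact_mod_cast ht.1)
      have hc0 : 0 ≤ c t s := Real.sqrt_nonneg _
      have hcsq : (c t s) ^ 2 = 2 * Real.log t / s := by
        rw [hcdef]
        exact Real.sq_sqrt (by positivity)
      have hexp : Real.exp (-2 * (s:ℝ) * (c t s) ^ 2) = Real.exp (-(4:ℝ) * Real.log t) := by
        congr 1
        rw [hcsq]
        field_simp
        ring
      have hE1eq : E1 t s = {ω | ∑ k ∈ Finset.Icc 1 s, hpr istar k ω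
          ≤ (s:ℝ) * μi istar - (s:ℝ) * c t s} := by
        ext ω
        simp only [hE1def, Set.mem_setOf_eq, hmuhat, ← histar']
        rw [one_div, inv_mul_eq_div, ← le_sub_iff_add_le, div_le_iff₀ hst, sub_mul]
        have e1 : μi istar * (s:ℝ) = (s:ℝ) * μi istar := mul_comm _ _
        have e2 : c t s * (s:ℝ) = (s:ℝ) * c t s := mul_comm _ _
        constructor <;> intro h <;> linarith
      have hE2eq : E2 t s = {ω | (s:ℝ) * μi i + (s:ℝ) * c t s
          ≤ ∑ k ∈ Finset.Icc 1 s, hpr i k ω} := by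
        ext ω
        simp only [hE2def, Set.mem_setOf_eq, hmuhat]
        rw [one_div, inv_mul_eq_div, le_div_iff₀ hst, add_mul]
        have e1 : μi i * (s:ℝ) = (s:ℝ) * μi i := mul_comm _ _
        have e2 : c t s * (s:ℝ) = (s:ℝ) * c t s := mul_comm _ _
        constructor <;> intro h <;> linarith
      have h1 : (μ (E1 t s)).toReal ≤ Real.exp (-(4:ℝ) * Real.log t) := by
        rw [hE1eq, ← hexp]
        exact DUCB_tail_lo μ (hpr istar) (hprmeas istar) (hpriid istar) (hprbdd istar)
          (μi istar) (hprmean istar) s (c t s) hc0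
      have h2 : (μ (E2 t s)).toReal ≤ Real.exp (-(4:ℝ) * Real.log t) := by
        rw [hE2eq, ← hexp]
        exact DUCB_tail μ (hpr i) (hprmeas i) (hpriid i) (hprbdd i)
          (μi i) (hprmean i) s (c t s) hc0
      linarith
    have hdouble : ∑ t ∈ Finset.Icc 1 n, ∑ s ∈ Finset.Icc 1 t,
        ((μ (E1 t s)).toReal + (μ (E2 t s)).toReal) ≤ 5 / 2 := by
      have step1 : ∑ t ∈ Finset.Icc 1 n, ∑ s ∈ Finset.Icc 1 t,
          ((μ (E1 t s)).toReal + (μ (E2 t s)).toReal)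
          ≤ ∑ t ∈ Finset.Icc 1 n, 2 * (((t:ℝ)) ^ 3)⁻¹ := by
        apply Finset.sum_le_sum
        intro t ht
        have ht' := Finset.mem_Icc.mp ht
        have htpos : (0:ℝ) < (t:ℝ) := by exact_mod_cast ht'.1
        have hexp4 : Real.exp (-(4:ℝ) * Real.log t) = (((t:ℝ)) ^ 4)⁻¹ := by
          rw [show (-(4:ℝ) * Real.log t) = Real.log ((((t:ℝ)) ^ 4)⁻¹) by
            rw [Real.log_inv, Real.log_pow]; push_cast; ring]
          exact Real.exp_log (by positivity)
        calc ∑ s ∈ Finset.Icc 1 t, ((μ (E1 t s)).toReal + (μ (E2 t s)).toReal)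
            ≤ ∑ s ∈ Finset.Icc 1 t, 2 * Real.exp (-(4:ℝ) * Real.log t) :=
              Finset.sum_le_sum (hprob t ht)
          _ = (t:ℝ) * (2 * Real.exp (-(4:ℝ) * Real.log t)) := by
              rw [Finset.sum_const, Nat.card_Icc]
              simp [nsmul_eq_mul]
          _ = 2 * (((t:ℝ)) ^ 3)⁻¹ := by
              rw [hexp4]
              field_simp
      calc _ ≤ ∑ t ∈ Finset.Icc 1 n, 2 * (((t:ℝ)) ^ 3)⁻¹ := step1
        _ = 2 * ∑ t ∈ Finset.Icc 1 n, (((t:ℝ)) ^ 3)⁻¹ := by rw [Finset.mul_sum]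
        _ ≤ 2 * (5 / 4) := by
            have := DUCB_sum_cube n
            linarith
        _ = 5 / 2 := by norm_num
    calc μ[fun ω => (T i n ω : ℝ)] ≤ _ := hmono
      _ = (ℓ : ℝ) + μ[fun ω => (Gi i ω : ℝ)]
          + ∑ t ∈ Finset.Icc 1 n, ∑ s ∈ Finset.Icc 1 t,
            ((μ (E1 t s)).toReal + (μ (E2 t s)).toReal) := hrhs
      _ ≤ (8 * Real.log n / (Δ i) ^ 2 + 1) + 5 / 2 + μ[fun ω => (Gi i ω : ℝ)] := by
          linarith
  -- assemble the final bound
  have hper : ∀ i, Δ i * μ[fun ω => (T i n ω : ℝ)]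
      ≤ (if 0 < Δ i then 8 * Real.log n / Δ i + 3.5 * Δ i else 0)
        + Δ i * μ[fun ω => (Gi i ω : ℝ)] := by
    intro i
    rcases eq_or_lt_of_le (hΔnn i) with h0 | hpos
    · rw [← h0]
      simp
    · rw [if_pos hpos]
      have hk := key i hpos
      have hmul := mul_le_mul_of_nonneg_left hk (le_of_lt hpos)
      have harith : Δ i * ((8 * Real.log n / (Δ i) ^ 2 + 1) + 5 / 2 + μ[fun ω => (Gi i ω : ℝ)])
          = (8 * Real.log n / Δ i + 3.5 * Δ i) + Δ i * μ[fun ω => (Gi i ω : ℝ)] := by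
        have hΔ0 : Δ i ≠ 0 := ne_of_gt hpos
        field_simp
        ring
      linarith [hmul, harith ▸ hmul]
  calc ∑ i, Δ i * μ[fun ω => (T i n ω : ℝ)]
      ≤ ∑ i, ((if 0 < Δ i then 8 * Real.log n / Δ i + 3.5 * Δ i else 0)
        + Δ i * μ[fun ω => (Gi i ω : ℝ)]) := Finset.sum_le_sum fun i _ => hper i
    _ = (∑ i ∈ Finset.univ.filter (fun i => 0 < Δ i), (8 * Real.log n / Δ i + 3.5 * Δ i))
        + ∑ i, Δ i * μ[fun ω => (Gi i ω : ℝ)] := by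
        rw [Finset.sum_add_distrib, Finset.sum_filter]
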